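/- Let P be a Markov kernel on a measurable space E and suppose there exist n ≥ 1 and L ≥ 1 such that P_n(x,B) ≤ L·P_n(x',B) for all x, x' ∈ E and all measurable sets B (the multi-step strong mixing condition (A.3)). Then for every bounded measurable g : E → ℝ (defining the MPE operator T) and every bounded measurable f : E → ℝ one has ‖T^n f‖_sp ≤ n·‖g‖_sp + (1/2)·log L, where T^n is the n-fold iterate of T. -/

import Mathlib

open MeasureTheory ProbabilityTheory

/-- The span seminorm `‖f‖_sp = (sup f - inf f)/2`. -/
noncomputable def spanSeminorm {E : Type*} (f : E → ℝ) : ℝ :=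
  ((⨆ x, f x) - ⨅ x, f x) / 2

/-- The multiplicative Poisson equation (MPE) operator
`(T f)(x) = g(x) + log ∫ exp (f y) P(x, dy)`. -/
noncomputable def mpeOp {E : Type*} [MeasurableSpace E] (P : Kernel E E) (g : E → ℝ)
    (f : E → ℝ) : E → ℝ :=
  fun x => g x + Real.log (∫ y, Real.exp (f y) ∂(P x))

/-- The `n`-step kernel `P_n`: the `n`-fold composition of `P` with itself
(`stepKernel P 0` is the identity kernel and `stepKernel P 1 = P`). -/
noncomputable def stepKernel {E : Type*} [MeasurableSpace E] (P : Kernel E E) : ℕ → Kernel E E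
  | 0 => Kernel.id
  | n + 1 => (stepKernel P n) ∘ₖ P

section Aux

variable {E : Type*} [MeasurableSpace E]

lemma aux_integrable_exp (μ : Measure E) [IsProbabilityMeasure μ]
    {h : E → ℝ} (hm : Measurable h) {C : ℝ} (hb : ∀ x, |h x| ≤ C) :
    Integrable (fun y => Real.exp (h y)) μ := by
  refine (integrable_const (Real.exp C)).mono'
    ((Real.measurable_exp.comp hm).aestronglyMeasurable) (ae_of_all _ fun y => ?_)
  rw [Real.norm_eq_abs, abs_of_pos (Real.exp_pos _)]
  exact Real.exp_le_exp.2 ((abs_le.1 (hb y)).2)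

lemma aux_exp_integral_bounds (μ : Measure E) [IsProbabilityMeasure μ]
    {h : E → ℝ} (hm : Measurable h) {C : ℝ} (hb : ∀ x, |h x| ≤ C) :
    Real.exp (-C) ≤ ∫ y, Real.exp (h y) ∂μ ∧ ∫ y, Real.exp (h y) ∂μ ≤ Real.exp C := by
  constructor
  · calc Real.exp (-C) = ∫ _y, Real.exp (-C) ∂μ := by simp
    _ ≤ ∫ y, Real.exp (h y) ∂μ := by
        refine integral_mono (integrable_const _) (aux_integrable_exp μ hm hb) fun y => ?_
        exact Real.exp_le_exp.2 (neg_le_of_abs_le (hb y))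
  · have h2 : ∫ y, Real.exp (h y) ∂μ ≤ ∫ _y, Real.exp C ∂μ := by
      refine integral_mono (aux_integrable_exp μ hm hb) (integrable_const _) fun y => ?_
      exact Real.exp_le_exp.2 ((abs_le.1 (hb y)).2)
    simpa using h2

lemma aux_exp_integral_pos (μ : Measure E) [IsProbabilityMeasure μ]
    {h : E → ℝ} (hm : Measurable h) {C : ℝ} (hb : ∀ x, |h x| ≤ C) :
    0 < ∫ y, Real.exp (h y) ∂μ :=
  lt_of_lt_of_le (Real.exp_pos (-C)) (aux_exp_integral_bounds μ hm hb).1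

lemma aux_abs_log_integral_exp (μ : Measure E) [IsProbabilityMeasure μ]
    {h : E → ℝ} (hm : Measurable h) {C : ℝ} (hb : ∀ x, |h x| ≤ C) :
    |Real.log (∫ y, Real.exp (h y) ∂μ)| ≤ C := by
  obtain ⟨h1, h2⟩ := aux_exp_integral_bounds μ hm hb
  rw [abs_le]
  constructor
  · have := Real.log_le_log (Real.exp_pos (-C)) h1
    rwa [Real.log_exp] at this
  · have := Real.log_le_log (aux_exp_integral_pos μ hm hb) h2
    rwa [Real.log_exp] at this

lemma aux_int_eq_lint (μ : Measure E) {h : E → ℝ} (hm : Measurable h) :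
    ∫ z, Real.exp (h z) ∂μ = (∫⁻ z, ENNReal.ofReal (Real.exp (h z)) ∂μ).toReal := by
  rw [integral_eq_lintegral_of_nonneg_ae (ae_of_all _ fun z => (Real.exp_pos _).le)
    ((Real.measurable_exp.comp hm).aestronglyMeasurable)]

lemma aux_measurable_integral_exp (κ : Kernel E E) [IsSFiniteKernel κ]
    {h : E → ℝ} (hm : Measurable h) :
    Measurable (fun x => ∫ y, Real.exp (h y) ∂(κ x)) := by
  have heq : (fun x => ∫ y, Real.exp (h y) ∂(κ x)) =
      fun x => (∫⁻ y, ENNReal.ofReal (Real.exp (h y)) ∂(κ x)).toReal := by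
    funext x; exact aux_int_eq_lint (κ x) hm
  rw [heq]
  exact (Measurable.lintegral_kernel
    (ENNReal.measurable_ofReal.comp (Real.measurable_exp.comp hm))).ennreal_toReal

lemma aux_lint_lt_top (μ : Measure E) [IsProbabilityMeasure μ]
    {h : E → ℝ} {C : ℝ} (hb : ∀ x, |h x| ≤ C) :
    (∫⁻ z, ENNReal.ofReal (Real.exp (h z)) ∂μ) < ⊤ := by
  calc ∫⁻ z, ENNReal.ofReal (Real.exp (h z)) ∂μ
      ≤ ∫⁻ _z, ENNReal.ofReal (Real.exp C) ∂μ :=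
        lintegral_mono fun z => ENNReal.ofReal_le_ofReal
          (Real.exp_le_exp.2 ((abs_le.1 (hb z)).2))
    _ = ENNReal.ofReal (Real.exp C) := by simp
    _ < ⊤ := ENNReal.ofReal_lt_top

lemma stepKernel_isMarkov (P : Kernel E E) [IsMarkovKernel P] :
    ∀ n, IsMarkovKernel (stepKernel P n)
  | 0 => by rw [stepKernel]; infer_instance
  | n + 1 => by
      rw [stepKernel]
      have := stepKernel_isMarkov P n
      infer_instance

lemma aux_integral_exp_comp (P Kn : Kernel E E) [IsMarkovKernel P] [IsMarkovKernel Kn]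
    {h : E → ℝ} (hm : Measurable h) {C : ℝ} (hb : ∀ x, |h x| ≤ C) (x : E) :
    ∫ z, Real.exp (h z) ∂((Kn ∘ₖ P) x) = ∫ y, (∫ z, Real.exp (h z) ∂(Kn y)) ∂(P x) := by
  have hφ : Measurable fun z => ENNReal.ofReal (Real.exp (h z)) :=
    ENNReal.measurable_ofReal.comp (Real.measurable_exp.comp hm)
  have hΛm : Measurable fun y => ∫⁻ z, ENNReal.ofReal (Real.exp (h z)) ∂(Kn y) :=
    Measurable.lintegral_kernel hφ
  calc ∫ z, Real.exp (h z) ∂((Kn ∘ₖ P) x)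
      = (∫⁻ z, ENNReal.ofReal (Real.exp (h z)) ∂((Kn ∘ₖ P) x)).toReal :=
        aux_int_eq_lint _ hm
    _ = (∫⁻ y, ∫⁻ z, ENNReal.ofReal (Real.exp (h z)) ∂(Kn y) ∂(P x)).toReal := by
        rw [Kernel.lintegral_comp _ _ _ hφ]
    _ = ∫ y, (∫⁻ z, ENNReal.ofReal (Real.exp (h z)) ∂(Kn y)).toReal ∂(P x) := by
        rw [integral_toReal hΛm.aemeasurable (ae_of_all _ fun y => aux_lint_lt_top (Kn y) hb)]
    _ = ∫ y, (∫ z, Real.exp (h z) ∂(Kn y)) ∂(P x) :=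
        integral_congr_ae (ae_of_all _ fun y => (aux_int_eq_lint _ hm).symm)

lemma aux_mix (Kn : Kernel E E) [IsMarkovKernel Kn] {L : ℝ} (hL : 1 ≤ L)
    (hsm : ∀ x x' : E, ∀ B : Set E, MeasurableSet B →
      (Kn x B).toReal ≤ L * (Kn x' B).toReal)
    {h : E → ℝ} (hm : Measurable h) {C : ℝ} (hb : ∀ x, |h x| ≤ C) (x x' : E) :
    ∫ z, Real.exp (h z) ∂(Kn x) ≤ L * ∫ z, Real.exp (h z) ∂(Kn x') := by
  have hL0 : 0 ≤ L := by linarith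
  have hle : Kn x ≤ (ENNReal.ofReal L) • (Kn x') := by
    rw [Measure.le_iff]
    intro B hB
    calc Kn x B = ENNReal.ofReal ((Kn x B).toReal) :=
          (ENNReal.ofReal_toReal (measure_ne_top _ _)).symm
      _ ≤ ENNReal.ofReal (L * (Kn x' B).toReal) := ENNReal.ofReal_le_ofReal (hsm x x' B hB)
      _ = ENNReal.ofReal L * ENNReal.ofReal ((Kn x' B).toReal) := ENNReal.ofReal_mul hL0
      _ = ENNReal.ofReal L * Kn x' B := by rw [ENNReal.ofReal_toReal (measure_ne_top _ _)]
      _ = ((ENNReal.ofReal L) • (Kn x')) B := by rw [Measure.smul_apply, smul_eq_mul]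
  have hlin : ∫⁻ z, ENNReal.ofReal (Real.exp (h z)) ∂(Kn x) ≤
      ENNReal.ofReal L * ∫⁻ z, ENNReal.ofReal (Real.exp (h z)) ∂(Kn x') := by
    calc ∫⁻ z, ENNReal.ofReal (Real.exp (h z)) ∂(Kn x)
        ≤ ∫⁻ z, ENNReal.ofReal (Real.exp (h z)) ∂((ENNReal.ofReal L) • Kn x') :=
          lintegral_mono' hle le_rfl
      _ = _ := by rw [lintegral_smul_measure, smul_eq_mul]
  rw [aux_int_eq_lint _ hm, aux_int_eq_lint _ hm]
  calc (∫⁻ z, ENNReal.ofReal (Real.exp (h z)) ∂(Kn x)).toReal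
      ≤ (ENNReal.ofReal L * ∫⁻ z, ENNReal.ofReal (Real.exp (h z)) ∂(Kn x')).toReal :=
        ENNReal.toReal_mono
          (ENNReal.mul_ne_top ENNReal.ofReal_ne_top (aux_lint_lt_top (Kn x') hb).ne) hlin
    _ = L * (∫⁻ z, ENNReal.ofReal (Real.exp (h z)) ∂(Kn x')).toReal := by
        rw [ENNReal.toReal_mul, ENNReal.toReal_ofReal hL0]

end Aux

/-- Under the multi-step strong mixing condition (A.3), `P_n(x,·) ≤ L · P_n(x',·)`, the
`n`-fold iterate of the MPE operator satisfies `‖Tⁿ f‖_sp ≤ n ‖g‖_sp + (1/2) log L` for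
every bounded measurable `f`. -/
theorem mpe_iterate_span_bound_of_strong_mixing {E : Type*} [MeasurableSpace E]
    (P : Kernel E E) [IsMarkovKernel P]
    (n : ℕ) (hn : 1 ≤ n) (L : ℝ) (hL : 1 ≤ L)
    (hsm : ∀ x x' : E, ∀ B : Set E, MeasurableSet B →
      ((stepKernel P n) x B).toReal ≤ L * ((stepKernel P n) x' B).toReal)
    (g : E → ℝ) (hg_meas : Measurable g) (Cg : ℝ) (hg_bdd : ∀ x, |g x| ≤ Cg)
    (f : E → ℝ) (hf_meas : Measurable f) (Cf : ℝ) (hf_bdd : ∀ x, |f x| ≤ Cf) :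
    spanSeminorm ((mpeOp P g)^[n] f) ≤ (n : ℝ) * spanSeminorm g + (1 / 2) * Real.log L := by
  classical
  rcases isEmpty_or_nonempty E with hE | hE
  · have h0 : ∀ (h : E → ℝ), spanSeminorm h = 0 := by
      intro h
      simp [spanSeminorm, iSup, iInf, Set.range_eq_empty, Real.sSup_empty, Real.sInf_empty]
    rw [h0, h0]
    have hlog := Real.log_nonneg hL
    nlinarith
  · obtain ⟨x0⟩ := hE
    have hCg : 0 ≤ Cg := (abs_nonneg _).trans (hg_bdd x0)
    have hCf : 0 ≤ Cf := (abs_nonneg _).trans (hf_bdd x0)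
    set Sg := ⨆ x, g x with hSg
    set Ig := ⨅ x, g x with hIg
    have hbddA : BddAbove (Set.range g) :=
      ⟨Cg, by rintro _ ⟨x, rfl⟩; exact (abs_le.1 (hg_bdd x)).2⟩
    have hbddB : BddBelow (Set.range g) :=
      ⟨-Cg, by rintro _ ⟨x, rfl⟩; exact neg_le_of_abs_le (hg_bdd x)⟩
    have hgS : ∀ x, g x ≤ Sg := fun x => le_ciSup hbddA x
    have hgI : ∀ x, Ig ≤ g x := fun x => ciInf_le hbddB x
    set T := mpeOp P g with hT
    set A : ℕ → E → ℝ := fun k x => ∫ y, Real.exp (f y) ∂(stepKernel P k x) with hA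
    have hApos : ∀ m x, 0 < A m x := by
      intro m x
      haveI := stepKernel_isMarkov P m
      exact aux_exp_integral_pos _ hf_meas hf_bdd
    have hAmeas : ∀ m, Measurable (A m) := by
      intro m
      haveI := stepKernel_isMarkov P m
      exact aux_measurable_integral_exp (stepKernel P m) hf_meas
    have hAbd : ∀ m x, |A m x| ≤ Real.exp Cf := by
      intro m x
      haveI := stepKernel_isMarkov P m
      rw [abs_of_pos (hApos m x)]
      exact (aux_exp_integral_bounds _ hf_meas hf_bdd).2
    have key : ∀ k : ℕ, Measurable (T^[k] f) ∧ (∀ x, |T^[k] f x| ≤ (k : ℝ) * Cg + Cf) ∧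
        (∀ x, T^[k] f x ≤ (k : ℝ) * Sg + Real.log (A k x)) ∧
        (∀ x, (k : ℝ) * Ig + Real.log (A k x) ≤ T^[k] f x) := by
      intro k
      induction k with
      | zero =>
        have hA0 : ∀ x, A 0 x = Real.exp (f x) := by
          intro x
          show ∫ y, Real.exp (f y) ∂(stepKernel P 0 x) = _
          rw [show stepKernel P 0 = Kernel.id from rfl, Kernel.id_apply,
            integral_dirac' (fun y => Real.exp (f y)) x ((Real.measurable_exp.comp hf_meas).stronglyMeasurable)]
        refine ⟨by simpa using hf_meas, fun x => by simpa using hf_bdd x,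
          fun x => ?_, fun x => ?_⟩ <;> simp [hA0 x, Real.log_exp]
      | succ k ih =>
        obtain ⟨ihm, ihb, ihu, ihl⟩ := ih
        haveI : IsMarkovKernel (stepKernel P k) := stepKernel_isMarkov P k
        haveI : IsMarkovKernel (stepKernel P (k + 1)) := stepKernel_isMarkov P (k + 1)
        set F := T^[k] f with hF
        have hnext : T^[k + 1] f = T F := by
          rw [hF, ← Function.iterate_succ_apply' T k f]
        have hTFx : ∀ x, T F x = g x + Real.log (∫ y, Real.exp (F y) ∂(P x)) := fun _ => rfl
        have hmeasT : Measurable (T F) :=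
          hg_meas.add (Real.measurable_log.comp (aux_measurable_integral_exp P ihm))
        have hbdT : ∀ x, |T F x| ≤ ((k : ℝ) + 1) * Cg + Cf := by
          intro x
          rw [hTFx x]
          have h1 := aux_abs_log_integral_exp (P x) ihm ihb
          calc |g x + Real.log (∫ y, Real.exp (F y) ∂(P x))|
              ≤ |g x| + |Real.log (∫ y, Real.exp (F y) ∂(P x))| := abs_add_le _ _
            _ ≤ Cg + ((k : ℝ) * Cg + Cf) := add_le_add (hg_bdd x) h1
            _ = ((k : ℝ) + 1) * Cg + Cf := by ring
        have hcomp : ∀ x, A (k + 1) x = ∫ y, A k y ∂(P x) := by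
          intro x
          show ∫ z, Real.exp (f z) ∂(stepKernel P (k + 1) x) = _
          rw [show stepKernel P (k + 1) = stepKernel P k ∘ₖ P from rfl]
          exact aux_integral_exp_comp P (stepKernel P k) hf_meas hf_bdd x
        have hAint : ∀ x, Integrable (A k) (P x) := by
          intro x
          refine (integrable_const (Real.exp Cf)).mono'
            (hAmeas k).aestronglyMeasurable (ae_of_all _ fun y => ?_)
          rw [Real.norm_eq_abs]
          exact hAbd k y
        have hpos : ∀ x, 0 < ∫ y, Real.exp (F y) ∂(P x) := fun x =>
          aux_exp_integral_pos (P x) ihm ihb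
        constructor
        · rw [hnext]; exact hmeasT
        refine ⟨fun x => by rw [hnext]; push_cast; exact hbdT x, fun x => ?_, fun x => ?_⟩
        · -- upper bound
          have hmono : ∫ y, Real.exp (F y) ∂(P x) ≤ Real.exp ((k : ℝ) * Sg) * A (k + 1) x := by
            rw [hcomp x, ← integral_const_mul]
            refine integral_mono (aux_integrable_exp (P x) ihm ihb)
              ((hAint x).const_mul _) fun y => ?_
            calc Real.exp (F y) ≤ Real.exp ((k : ℝ) * Sg + Real.log (A k y)) :=
                Real.exp_le_exp.2 (ihu y)
              _ = Real.exp ((k : ℝ) * Sg) * A k y := by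
                  rw [Real.exp_add, Real.exp_log (hApos k y)]
          have hlog := Real.log_le_log (hpos x) hmono
          rw [Real.log_mul (Real.exp_pos _).ne' (hApos (k + 1) x).ne', Real.log_exp] at hlog
          rw [hnext, hTFx x]
          push_cast
          linarith [hgS x]
        · -- lower bound
          have hmono : Real.exp ((k : ℝ) * Ig) * A (k + 1) x ≤ ∫ y, Real.exp (F y) ∂(P x) := by
            rw [hcomp x, ← integral_const_mul]
            refine integral_mono ((hAint x).const_mul _)
              (aux_integrable_exp (P x) ihm ihb) fun y => ?_
            calc Real.exp ((k : ℝ) * Ig) * A k y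
                = Real.exp ((k : ℝ) * Ig + Real.log (A k y)) := by
                  rw [Real.exp_add, Real.exp_log (hApos k y)]
              _ ≤ Real.exp (F y) := Real.exp_le_exp.2 (ihl y)
          have hlog := Real.log_le_log (mul_pos (Real.exp_pos _) (hApos (k + 1) x)) hmono
          rw [Real.log_mul (Real.exp_pos _).ne' (hApos (k + 1) x).ne', Real.log_exp] at hlog
          rw [hnext, hTFx x]
          push_cast
          linarith [hgI x]
    haveI : Nonempty E := ⟨x0⟩
    obtain ⟨hmeasN, hbN, hupN, hloN⟩ := key n
    haveI : IsMarkovKernel (stepKernel P n) := stepKernel_isMarkov P n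
    have hmix : ∀ x x', A n x ≤ L * A n x' := fun x x' =>
      aux_mix (stepKernel P n) hL hsm hf_meas hf_bdd x x'
    have hL0 : (0 : ℝ) < L := by linarith
    have hkey : ∀ x x', T^[n] f x ≤ T^[n] f x' + ((n : ℝ) * (Sg - Ig) + Real.log L) := by
      intro x x'
      have h3 : Real.log (A n x) ≤ Real.log L + Real.log (A n x') := by
        have h4 := Real.log_le_log (hApos n x) (hmix x x')
        rwa [Real.log_mul hL0.ne' (hApos n x').ne'] at h4
      have h5 : (n : ℝ) * (Sg - Ig) = (n : ℝ) * Sg - (n : ℝ) * Ig := by ring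
      linarith [hupN x, hloN x']
    set C := (n : ℝ) * (Sg - Ig) + Real.log L with hC
    have hS : (⨆ x, T^[n] f x) ≤ (⨅ x, T^[n] f x) + C := by
      refine ciSup_le fun x => ?_
      have h6 : T^[n] f x - C ≤ ⨅ x', T^[n] f x' :=
        le_ciInf fun x' => by linarith [hkey x x']
      linarith
    have hgspan : spanSeminorm g = (Sg - Ig) / 2 := rfl
    rw [hgspan]
    rw [show spanSeminorm (T^[n] f) = ((⨆ x, T^[n] f x) - ⨅ x, T^[n] f x) / 2 from rfl]
    have h7 : (n : ℝ) * ((Sg - Ig) / 2) = ((n : ℝ) * (Sg - Ig)) / 2 := by ring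
    linarith
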